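/- For every n ≥ 3, the cycle hypergraph C_n, with vertices A_1, …, A_n (each with domain containing {0, 1}) and hyperedges {A_1,A_2}, {A_2,A_3}, …, {A_{n-1},A_n}, {A_n,A_1}, does not have the local-to-global consistency property for bags: there exists a pairwise consistent collection of bags over the hyperedges of C_n that is not globally consistent. -/

import Mathlib

variable {A : Type} [DecidableEq A]

/-- The type of `X`-tuples: functions assigning to each attribute `a ∈ X` an element
of its domain `D a`. -/
def Tup (D : A → Type) (X : Finset A) : Type := ∀ a : X, D a.1

/-- Restriction (projection) of an `X`-tuple to `Z ⊆ X`. -/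
def Tup.restrict {D : A → Type} {X Z : Finset A} (h : Z ⊆ X) (t : Tup D X) : Tup D Z :=
  fun a => t ⟨a.1, h a.2⟩

/-- A bag over `X`: a finitely supported function from `X`-tuples to ℕ. -/
abbrev Bag (D : A → Type) (X : Finset A) : Type := Tup D X →₀ ℕ

/-- The marginal of a bag on `Z ⊆ X`. -/
noncomputable def Bag.marginal {D : A → Type} {X Z : Finset A} (h : Z ⊆ X) (R : Bag D X) :
    Bag D Z := Finsupp.mapDomain (Tup.restrict h) R

/-- Two bags are consistent if a common bag over the union of schemas has them as marginals. -/
def Consistent {D : A → Type} {X Y : Finset A} (R : Bag D X) (S : Bag D Y) : Prop :=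
  ∃ T : Bag D (X ∪ Y),
    Bag.marginal Finset.subset_union_left T = R ∧
    Bag.marginal Finset.subset_union_right T = S

/-- Global consistency of a finite family of bags. -/
def GloballyConsistent {D : A → Type} {m : ℕ} (X : Fin m → Finset A)
    (R : ∀ i, Bag D (X i)) : Prop :=
  ∃ T : Bag D (Finset.univ.sup X),
    ∀ i, Bag.marginal (Finset.le_sup (Finset.mem_univ i)) T = R i

-- AUX
set_option linter.unusedSectionVars false
section Aux
variable {D : A → Type} (e : ∀ a : A, Fin 2 ↪ D a)

def tupOf (f : A → Fin 2) (X : Finset A) : Tup D X :=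
  fun a => e a.1 (f a.1)

lemma restrict_tupOf {X Z : Finset A} (h : Z ⊆ X) (f : A → Fin 2) :
    Tup.restrict h (tupOf e f X) = tupOf e f Z := rfl

lemma tupOf_congr {f g : A → Fin 2} {X : Finset A} (h : ∀ a ∈ X, f a = g a) :
    tupOf e f X = tupOf e g X :=
  funext fun a => congrArg (e a.1) (h a.1 a.2)

lemma tupOf_ne {f g : A → Fin 2} {X : Finset A} {a : A} (ha : a ∈ X) (h : f a ≠ g a) :
    tupOf e f X ≠ tupOf e g X :=
  fun H => h ((e a).injective (congrFun H ⟨a, ha⟩))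

noncomputable def bagOf (X : Finset A) (L : List ((A → Fin 2) × ℕ)) : Bag D X :=
  (L.map fun p => Finsupp.single (tupOf e p.1 X) p.2).sum

lemma marginal_bagOf {X Z : Finset A} (h : Z ⊆ X) (L : List ((A → Fin 2) × ℕ)) :
    Bag.marginal h (bagOf e X L) = bagOf e Z L := by
  induction L with
  | nil => simp [bagOf, Bag.marginal]
  | cons p L ih =>
    simp only [bagOf, List.map_cons, List.sum_cons] at *
    rw [Bag.marginal, Finsupp.mapDomain_add, Finsupp.mapDomain_single, restrict_tupOf]
    rw [Bag.marginal] at ih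
    rw [ih]

lemma consistent_bagOf {X Y : Finset A} (L : List ((A → Fin 2) × ℕ)) :
    Consistent (bagOf e X L) (bagOf e Y L) :=
  ⟨bagOf e (X ∪ Y) L, marginal_bagOf e _ L, marginal_bagOf e _ L⟩

lemma marginal_apply_eq_zero {X Z : Finset A} (h : Z ⊆ X) (T : Bag D X) (s : Tup D Z)
    (hs : ∀ t ∈ T.support, Tup.restrict h t ≠ s) : Bag.marginal h T s = 0 := by
  rw [Bag.marginal, Finsupp.mapDomain, Finsupp.sum_apply]
  rw [Finsupp.sum]
  exact Finset.sum_eq_zero fun t ht => by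
    exact Finsupp.single_eq_of_ne' (hs t ht)

lemma le_marginal_apply {X Z : Finset A} (h : Z ⊆ X) (T : Bag D X) (t : Tup D X) :
    T t ≤ Bag.marginal h T (Tup.restrict h t) := by
  by_cases ht : t ∈ T.support
  · rw [Bag.marginal, Finsupp.mapDomain, Finsupp.sum_apply, Finsupp.sum]
    calc T t = Finsupp.single (Tup.restrict h t) (T t) (Tup.restrict h t) := by
          rw [Finsupp.single_eq_same]
      _ ≤ _ := Finset.single_le_sum
          (f := fun t' => Finsupp.single (Tup.restrict h t') (T t') (Tup.restrict h t))
          (fun i _ => Nat.zero_le _) ht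
  · simp only [Finsupp.notMem_support_iff] at ht
    rw [ht]; exact Nat.zero_le _

end Aux

/-- for every `n ≥ 3`, the cycle hypergraph `C_n` with vertices `A_1, …, A_n`
(each with domain containing `{0,1}`) and hyperedges `{A_i, A_{i+1}}` (cyclically) does not
have the local-to-global consistency property for bags: some pairwise consistent collection
of bags over its hyperedges is not globally consistent.  (Here `n = m + 3`, so that all
`n ≥ 3` are covered; the vertices are the elements of `Fin (m+3)` and the hyperedges are
`{i, i+1}` with addition modulo `n`.) -/
theorem stmt7 (m : ℕ) (D : Fin (m + 3) → Type) (e : ∀ a : Fin (m + 3), Fin 2 ↪ D a) :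
    ∃ R : ∀ i : Fin (m + 3), Bag D ({i, i + 1} : Finset (Fin (m + 3))),
      (∀ i j, Consistent (R i) (R j)) ∧
      ¬ GloballyConsistent (fun i : Fin (m + 3) => ({i, i + 1} : Finset (Fin (m + 3)))) R := by
  classical
  set lst : Fin (m + 3) := Fin.last (m + 2) with hlstdef
  have h10 : lst + 1 = 0 := by
    apply Fin.ext
    rw [Fin.val_add_one]
    simp [hlstdef]
  have hadd1 : ∀ i : Fin (m + 3), i ≠ lst → i + 1 ≠ 0 := by
    intro i hi h
    apply hi
    have := congrArg Fin.val h
    rw [Fin.val_add_one] at this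
    split at this
    · assumption
    · simp at this
  have h0lst : (0 : Fin (m + 3)) ≠ lst := by
    simp [hlstdef, Fin.ext_iff]
  have h1lst : (0 : Fin (m + 3)) + 1 ≠ lst := by
    rw [zero_add]
    intro h
    have hv := congrArg Fin.val h
    rw [Fin.val_one, hlstdef, Fin.val_last] at hv
    omega
  set c : Fin 2 → Fin (m + 3) → Fin 2 := fun b _ => b with hc
  set f01 : Fin (m + 3) → Fin 2 := fun a => if a = lst then 0 else 1 with hf01
  set f10 : Fin (m + 3) → Fin 2 := fun a => if a = lst then 1 else 0 with hf10
  set L0 : List ((Fin (m + 3) → Fin 2) × ℕ) := [(c 0, 1), (c 1, 2)] with hL0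
  set LL : List ((Fin (m + 3) → Fin 2) × ℕ) := [(f01, 1), (f10, 1), (c 1, 1)] with hLL
  have memi : ∀ i : Fin (m + 3), i ∈ ({i, i + 1} : Finset (Fin (m + 3))) :=
    fun i => Finset.mem_insert_self _ _
  have memi1 : ∀ i : Fin (m + 3), i + 1 ∈ ({i, i + 1} : Finset (Fin (m + 3))) :=
    fun i => Finset.mem_insert_of_mem (Finset.mem_singleton_self _)
  -- key pairing lemma
  have key : ∀ i : Fin (m + 3), i ≠ lst →
      ∃ L, bagOf e ({i, i + 1} : Finset (Fin (m + 3))) L0 = bagOf e {i, i + 1} L ∧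
        bagOf e ({lst, lst + 1} : Finset (Fin (m + 3))) LL = bagOf e {lst, lst + 1} L := by
    intro i hi
    by_cases h0 : i = 0
    · subst h0
      refine ⟨LL, ?_, rfl⟩
      have nl : ∀ a ∈ ({(0 : Fin (m + 3)), 0 + 1} : Finset (Fin (m + 3))), a ≠ lst := by
        intro a ha
        rcases Finset.mem_insert.1 ha with h | h
        · subst h; exact h0lst
        · rw [Finset.mem_singleton] at h; subst h; exact h1lst
      have e1 : tupOf e f01 ({(0 : Fin (m + 3)), 0 + 1} : Finset (Fin (m + 3))) = tupOf e (c 1) _ :=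
        tupOf_congr e (fun a ha => by simp [hf01, hc, nl a ha])
      have e2 : tupOf e f10 ({(0 : Fin (m + 3)), 0 + 1} : Finset (Fin (m + 3))) = tupOf e (c 0) _ :=
        tupOf_congr e (fun a ha => by simp [hf10, hc, nl a ha])
      simp only [hL0, hLL, bagOf, List.map_cons, List.map_nil, List.sum_cons, List.sum_nil, e1, e2]
      ext s
      simp only [Finsupp.coe_add, Pi.add_apply, Finsupp.single_apply, Finsupp.coe_zero,
        Pi.zero_apply]
      split_ifs <;> omega
    · set g1 : Fin (m + 3) → Fin 2 := fun a => if a = i ∨ a = i + 1 then 0 else f01 a with hg1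
      set g2 : Fin (m + 3) → Fin 2 := fun a => if a = i ∨ a = i + 1 then 1 else f10 a with hg2
      refine ⟨[(g1, 1), (g2, 1), (c 1, 1)], ?_, ?_⟩
      · have e1 : tupOf e g1 ({i, i + 1} : Finset (Fin (m + 3))) = tupOf e (c 0) _ :=
          tupOf_congr e (fun a ha => by
            rcases Finset.mem_insert.1 ha with h | h
            · simp [hg1, hc, h]
            · rw [Finset.mem_singleton] at h; simp [hg1, hc, h])
        have e2 : tupOf e g2 ({i, i + 1} : Finset (Fin (m + 3))) = tupOf e (c 1) _ :=
          tupOf_congr e (fun a ha => by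
            rcases Finset.mem_insert.1 ha with h | h
            · simp [hg2, hc, h]
            · rw [Finset.mem_singleton] at h; simp [hg2, hc, h])
        simp only [hL0, bagOf, List.map_cons, List.map_nil, List.sum_cons, List.sum_nil, e1, e2]
        ext s
        simp only [Finsupp.coe_add, Pi.add_apply, Finsupp.single_apply, Finsupp.coe_zero,
          Pi.zero_apply]
        split_ifs <;> omega
      · have hnotin : ∀ a ∈ ({lst, lst + 1} : Finset (Fin (m + 3))), ¬ a = i := by
          intro a ha
          rcases Finset.mem_insert.1 ha with h | h
          · subst h; exact fun h' => hi h'.symm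
          · rw [Finset.mem_singleton] at h; subst h; rw [h10]; exact fun h' => h0 h'.symm
        have e1 : tupOf e g1 ({lst, lst + 1} : Finset (Fin (m + 3))) = tupOf e f01 _ :=
          tupOf_congr e (fun a ha => by
            rcases Finset.mem_insert.1 ha with h | h
            · subst h
              by_cases h2 : lst = i + 1
              · simp [hg1, hf01, h2]
              · simp [hg1, hnotin _ ha, h2]
            · rw [Finset.mem_singleton] at h; subst h
              have hne : ¬ lst + 1 = i + 1 := by
                rw [h10]; intro h'; exact hadd1 i hi h'.symm
              simp [hg1, hnotin _ ha, hne])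
        have e2 : tupOf e g2 ({lst, lst + 1} : Finset (Fin (m + 3))) = tupOf e f10 _ :=
          tupOf_congr e (fun a ha => by
            rcases Finset.mem_insert.1 ha with h | h
            · subst h
              by_cases h2 : lst = i + 1
              · simp [hg2, hf10, h2]
              · simp [hg2, hnotin _ ha, h2]
            · rw [Finset.mem_singleton] at h; subst h
              have hne : ¬ lst + 1 = i + 1 := by
                rw [h10]; intro h'; exact hadd1 i hi h'.symm
              simp [hg2, hnotin _ ha, hne])
        simp only [hLL, bagOf, List.map_cons, List.map_nil, List.sum_cons, List.sum_nil, e1, e2]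
  refine ⟨fun i => bagOf e {i, i + 1} (if i = lst then LL else L0), ?_, ?_⟩
  · -- pairwise consistency
    intro i j
    by_cases hi : i = lst <;> by_cases hj : j = lst
    · simp only [if_pos hi, if_pos hj]; exact consistent_bagOf e LL
    · obtain ⟨L, hL1, hL2⟩ := key j hj
      subst hi
      simp only [if_neg hj, eq_self_iff_true, if_true]
      rw [hL1, hL2]
      exact consistent_bagOf e L
    · obtain ⟨L, hL1, hL2⟩ := key i hi
      subst hj
      simp only [if_neg hi, eq_self_iff_true, if_true]
      rw [hL1, hL2]
      exact consistent_bagOf e L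
    · simp only [if_neg hi, if_neg hj]; exact consistent_bagOf e L0
  · -- not globally consistent
    intro hGC
    unfold GloballyConsistent at hGC
    obtain ⟨T, hT⟩ := hGC
    have hsub : ∀ k : Fin (m + 3), ({k, k + 1} : Finset (Fin (m + 3))) ⊆
        Finset.univ.sup (fun i : Fin (m + 3) => ({i, i + 1} : Finset (Fin (m + 3)))) :=
      fun k => Finset.le_iff_subset.mp
        (Finset.le_sup (f := fun i : Fin (m + 3) => ({i, i + 1} : Finset (Fin (m + 3))))
          (Finset.mem_univ k))
    have hU : ∀ k : Fin (m + 3),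
        k ∈ Finset.univ.sup (fun i : Fin (m + 3) => ({i, i + 1} : Finset (Fin (m + 3)))) :=
      fun k => hsub k (memi k)
    -- value of R lst at tupOf f01 is 1
    have hval : bagOf e ({lst, lst + 1} : Finset (Fin (m + 3)))
        LL (tupOf e f01 {lst, lst + 1}) = 1 := by
      have n1 : tupOf e f10 ({lst, lst + 1} : Finset (Fin (m + 3))) ≠ tupOf e f01 _ :=
        tupOf_ne e (memi lst) (by simp [hf01, hf10])
      have n2 : tupOf e (c 1) ({lst, lst + 1} : Finset (Fin (m + 3))) ≠ tupOf e f01 _ :=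
        tupOf_ne e (memi lst) (by simp [hf01, hc])
      simp only [hLL, bagOf, List.map_cons, List.map_nil, List.sum_cons, List.sum_nil,
        Finsupp.add_apply, Finsupp.zero_apply, Finsupp.single_eq_same,
        Finsupp.single_eq_of_ne' n1, Finsupp.single_eq_of_ne' n2]
      rfl
    -- but the marginal of T there is 0
    have hzero : Bag.marginal (hsub lst) T
        (tupOf e f01 {lst, lst + 1}) = 0 := by
      apply marginal_apply_eq_zero
      intro t ht hEq
      -- step: each non-last edge forces equal bits
      have step : ∀ i : Fin (m + 3), i ≠ lst →
          ∃ b : Fin 2, t ⟨i, hU i⟩ = e i b ∧ t ⟨i + 1, hU (i + 1)⟩ = e (i + 1) b := by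
        intro i hi
        have hle := le_marginal_apply (hsub i) T t
        simp only [hT i, if_neg hi] at hle
        have hpos : bagOf e ({i, i + 1} : Finset (Fin (m + 3))) L0
            (Tup.restrict (hsub i) t) ≠ 0 := by
          intro h
          rw [h] at hle
          exact Finsupp.mem_support_iff.1 ht (Nat.le_zero.1 hle)
        set s := Tup.restrict (hsub i) t with hs
        have hcase : s = tupOf e (c 0) {i, i + 1} ∨ s = tupOf e (c 1) {i, i + 1} := by
          by_contra hcon
          push_neg at hcon
          apply hpos
          simp only [hL0, bagOf, List.map_cons, List.map_nil, List.sum_cons, List.sum_nil,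
            Finsupp.add_apply, Finsupp.zero_apply,
            Finsupp.single_eq_of_ne' (Ne.symm hcon.1), Finsupp.single_eq_of_ne' (Ne.symm hcon.2)]
          rfl
        rcases hcase with h | h
        · exact ⟨0, (congrFun h ⟨i, memi i⟩ : _), (congrFun h ⟨i + 1, memi1 i⟩ : _)⟩
        · exact ⟨1, (congrFun h ⟨i, memi i⟩ : _), (congrFun h ⟨i + 1, memi1 i⟩ : _)⟩
      -- chain around the cycle
      have chain : ∀ k : Fin (m + 3), ∃ b : Fin 2,
          t ⟨0, hU 0⟩ = e 0 b ∧ t ⟨k, hU k⟩ = e k b := by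
        intro k
        induction k using Fin.induction with
        | zero =>
          obtain ⟨b, hb, _⟩ := step 0 h0lst
          exact ⟨b, hb, hb⟩
        | succ j ih =>
          obtain ⟨b, h0b, hjb⟩ := ih
          obtain ⟨b', hj', hj1'⟩ := step j.castSucc (Fin.ne_of_lt (Fin.castSucc_lt_last j))
          have hbb : b = b' := (e _).injective (hjb.symm.trans hj')
          rw [Fin.coeSucc_eq_succ] at hj1'
          exact ⟨b, h0b, hbb ▸ hj1'⟩
      obtain ⟨b, h0b, hlb⟩ := chain lst
      -- coordinate at lst
      have c1 : t ⟨lst, hU lst⟩ = e lst (f01 lst) := congrFun hEq ⟨lst, memi lst⟩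
      have hb0 : b = 0 := by
        have := (e lst).injective (hlb.symm.trans c1)
        simpa [hf01] using this
      -- coordinate at 0
      have p0 : (0 : Fin (m + 3)) ∈ ({lst, lst + 1} : Finset (Fin (m + 3))) := by
        rw [← h10]; exact memi1 lst
      have c2 : t ⟨0, hU 0⟩ = e 0 (f01 0) := congrFun hEq ⟨0, p0⟩
      have hb1 : b = 1 := by
        have := (e (0 : Fin (m + 3))).injective (h0b.symm.trans c2)
        simpa [hf01, h0lst] using this
      rw [hb0] at hb1
      exact absurd hb1 (by decide)
    simp only [hT lst, eq_self_iff_true, if_true] at hzero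
    rw [hval] at hzero
    exact one_ne_zero hzero
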